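/- Let (𝔘, G, α) be a C*-dynamical system and ω a state such that for some net g^i, lim_i (ω(α_{g^i}(A)B) − ω(α_{g^i}A)ω(B)) = 0 for all A, B ∈ 𝔘. Then for every n ≥ 2, the free cumulants satisfy lim_i κ_n(α_{g^i}A_1, A_2, ..., A_n) = 0 and lim_i κ_n(A_1, ..., A_{n-1}, α_{g^i}A_n) = 0 for all A_1,...,A_n ∈ 𝔘. -/

import Mathlib

open scoped Classical
open Filter Topology

noncomputable section

/-- `π` is a set-partition of the finite set `S ⊆ ℕ`: a collection of nonempty subsets of `S`
such that every element of `S` lies in exactly one of them. -/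
def IsSetPartition (S : Finset ℕ) (π : Finset (Finset ℕ)) : Prop :=
  (∀ V ∈ π, V ⊆ S) ∧ (∀ V ∈ π, V.Nonempty) ∧ ∀ a ∈ S, ∃! V, V ∈ π ∧ a ∈ V

/-- The finset of all set-partitions of `S`. -/
def setPartitions (S : Finset ℕ) : Finset (Finset (Finset ℕ)) :=
  S.powerset.powerset.filter (IsSetPartition S)

/-- A family of blocks is non-crossing if there are no `a < b < c < d` with `a, c` in one
block and `b, d` in a different block. -/
def IsNonCrossing (π : Finset (Finset ℕ)) : Prop :=
  ¬ ∃ a b c d : ℕ, a < b ∧ b < c ∧ c < d ∧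
      ∃ V ∈ π, ∃ W ∈ π, V ≠ W ∧ a ∈ V ∧ c ∈ V ∧ b ∈ W ∧ d ∈ W

/-- The finset of all non-crossing partitions of `S`. -/
def ncPartitions (S : Finset ℕ) : Finset (Finset (Finset ℕ)) :=
  (setPartitions S).filter IsNonCrossing

variable {𝔘 : Type*}

/-- The ordered list `A_{i_1}, …, A_{i_s}` of observables indexed by `V = {i_1 < ⋯ < i_s}`. -/
def blockList (A : ℕ → 𝔘) (V : Finset ℕ) : List 𝔘 :=
  (V.sort (· ≤ ·)).map A

/-- The ordered product `A_{i_1} ⋯ A_{i_s}` over the block `V = {i_1 < ⋯ < i_s}`. -/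
def blockProd [Monoid 𝔘] (A : ℕ → 𝔘) (V : Finset ℕ) : 𝔘 :=
  (blockList A V).prod

/-- The joint classical cumulant of `ω` of the observables `A_i`, `i ∈ S` (order preserved):
`c(S) = ∑_{π ∈ P(S)} (-1)^{|π|-1}(|π|-1)! ∏_{V ∈ π} ω(∏_{i ∈ V} A_i)`. -/
def cumulant [Monoid 𝔘] (ω : 𝔘 → ℂ) (A : ℕ → 𝔘) (S : Finset ℕ) : ℂ :=
  ∑ π ∈ setPartitions S,
    (-1 : ℂ) ^ (π.card - 1) * ((π.card - 1).factorial : ℂ) * ∏ V ∈ π, ω (blockProd A V)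

/-- `κ` (as a function of the ordered list of observables) is the family of free cumulants of
`ω`: it satisfies the moments-to-free-cumulants formula over non-crossing partitions. -/
def IsFreeCumulantFamily [Monoid 𝔘] (ω : 𝔘 → ℂ) (κ : List 𝔘 → ℂ) : Prop :=
  ∀ (A : ℕ → 𝔘) (S : Finset ℕ), S.Nonempty →
    ω (blockProd A S) = ∑ π ∈ ncPartitions S, ∏ V ∈ π, κ (blockList A V)

/-- A state on a unital C*-algebra: a positive unital linear functional. -/
structure IsState [NormedRing 𝔘] [StarRing 𝔘] [NormedAlgebra ℂ 𝔘] (ω : 𝔘 →ₗ[ℂ] ℂ) : Prop where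
  unital : ω 1 = 1
  positive : ∀ a : 𝔘, 0 ≤ (ω (star a * a)).re ∧ (ω (star a * a)).im = 0

/-- `α` is a representation of the group `G` by *-automorphisms. -/
def IsStarAutoRep {G : Type*} [Monoid G] [Ring 𝔘] [Algebra ℂ 𝔘] [StarRing 𝔘]
    (α : G → 𝔘 ≃⋆ₐ[ℂ] 𝔘) : Prop :=
  ∀ (g h : G) (x : 𝔘), α (g * h) x = α g (α h x)

lemma mem_setPartitions' {S : Finset ℕ} {π : Finset (Finset ℕ)} :
    π ∈ setPartitions S ↔ IsSetPartition S π := by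
  constructor
  · intro h; exact (Finset.mem_filter.mp h).2
  · intro h
    refine Finset.mem_filter.mpr ⟨Finset.mem_powerset.mpr ?_, h⟩
    intro V hV
    exact Finset.mem_powerset.mpr (h.1 V hV)

lemma mem_ncPartitions' {S : Finset ℕ} {π : Finset (Finset ℕ)} :
    π ∈ ncPartitions S ↔ IsSetPartition S π ∧ IsNonCrossing π := by
  unfold ncPartitions
  rw [Finset.mem_filter, mem_setPartitions']

lemma IsSetPartition.block_eq {S : Finset ℕ} {π : Finset (Finset ℕ)}
    (h : IsSetPartition S π) {W W' : Finset ℕ} {a : ℕ} (hW : W ∈ π) (hW' : W' ∈ π)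
    (haW : a ∈ W) (haW' : a ∈ W') : W = W' := by
  obtain ⟨V, -, hu⟩ := h.2.2 a (h.1 W hW haW)
  rw [hu W ⟨hW, haW⟩, hu W' ⟨hW', haW'⟩]

lemma IsSetPartition.eq_full {S : Finset ℕ} {π : Finset (Finset ℕ)}
    (h : IsSetPartition S π) (hS : S ∈ π) : π = {S} := by
  refine Finset.eq_singleton_iff_unique_mem.mpr ⟨hS, ?_⟩
  intro W hW
  obtain ⟨x, hx⟩ := h.2.1 W hW
  exact h.block_eq hW hS hx (h.1 W hW hx)

lemma IsNonCrossing.mono {π σ : Finset (Finset ℕ)} (h : IsNonCrossing π) (hs : σ ⊆ π) :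
    IsNonCrossing σ := by
  rintro ⟨a, b, c, d, h1, h2, h3, V, hV, W, hW, hne, m1, m2, m3, m4⟩
  exact h ⟨a, b, c, d, h1, h2, h3, V, hs hV, W, hs hW, hne, m1, m2, m3, m4⟩

lemma full_mem_ncPartitions {S : Finset ℕ} (hS : S.Nonempty) : {S} ∈ ncPartitions S := by
  refine mem_ncPartitions'.mpr ⟨⟨?_, ?_, ?_⟩, ?_⟩
  · intro V hV; rw [Finset.mem_singleton.mp hV]
  · intro V hV; rw [Finset.mem_singleton.mp hV]; exact hS
  · intro a ha
    refine ⟨S, ⟨Finset.mem_singleton_self S, ha⟩, ?_⟩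
    rintro W ⟨hW, -⟩
    exact Finset.mem_singleton.mp hW
  · rintro ⟨a, b, c, d, h1, h2, h3, V, hV, W, hW, hne, -⟩
    exact hne ((Finset.mem_singleton.mp hV).trans (Finset.mem_singleton.mp hW).symm)

lemma ncPartitions_singleton (m : ℕ) : ncPartitions {m} = {{{m}}} := by
  ext π
  rw [Finset.mem_singleton]
  constructor
  · intro h
    obtain ⟨hsp, -⟩ := mem_ncPartitions'.mp h
    obtain ⟨V, ⟨hVπ, hmV⟩, -⟩ := hsp.2.2 m (Finset.mem_singleton_self m)
    have hVm : V = {m} :=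
      subset_antisymm (hsp.1 V hVπ) (Finset.singleton_subset_iff.mpr hmV)
    have : ({m} : Finset ℕ) ∈ π := hVm ▸ hVπ
    exact hsp.eq_full (by simpa [hVm] using hVπ)
  · rintro rfl
    exact full_mem_ncPartitions ⟨m, Finset.mem_singleton_self m⟩

lemma blockList_congr {A A' : ℕ → 𝔘} {V : Finset ℕ} (h : ∀ x ∈ V, A x = A' x) :
    blockList A V = blockList A' V :=
  List.map_congr_left fun x hx => h x ((Finset.mem_sort _).mp hx)

lemma kappa_singleton [Monoid 𝔘] {ω : 𝔘 → ℂ} {κ : List 𝔘 → ℂ}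
    (hκ : IsFreeCumulantFamily ω κ) (B : ℕ → 𝔘) (m : ℕ) :
    κ (blockList B {m}) = ω (B m) := by
  have h := hκ B {m} ⟨m, Finset.mem_singleton_self m⟩
  rw [ncPartitions_singleton, Finset.sum_singleton, Finset.prod_singleton] at h
  have hbp : blockProd B {m} = B m := by
    unfold blockProd blockList
    rw [Finset.sort_singleton]
    simp
  rw [hbp] at h
  exact h.symm

lemma sort_eq_cons {V : Finset ℕ} {m : ℕ} (hm : m ∈ V) (h : ∀ x ∈ V, m ≤ x) :
    V.sort (· ≤ ·) = m :: (V.erase m).sort (· ≤ ·) := by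
  conv_lhs => rw [← Finset.insert_erase hm]
  exact Finset.sort_insert _ (fun b hb => h b (Finset.mem_of_mem_erase hb))
    (Finset.notMem_erase m V)

lemma sort_eq_append {V : Finset ℕ} {m : ℕ} (hm : m ∈ V) (h : ∀ x ∈ V, x ≤ m) :
    V.sort (· ≤ ·) = (V.erase m).sort (· ≤ ·) ++ [m] := by
  apply fun hp hs => List.Perm.eq_of_pairwise' (r := (· ≤ ·)) (Finset.pairwise_sort _ _) hs hp
  · rw [← Multiset.coe_eq_coe]
    have h1 : ((V.sort (· ≤ ·) : List ℕ) : Multiset ℕ) = V.1 := Finset.sort_eq _ _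
    have h2 : (((V.erase m).sort (· ≤ ·) : List ℕ) : Multiset ℕ) = (V.erase m).1 :=
      Finset.sort_eq _ _
    rw [h1, ← Multiset.coe_add, h2, Finset.erase_val, add_comm,
      Multiset.coe_singleton, Multiset.singleton_add, Multiset.cons_erase hm]
  · rw [List.pairwise_append]
    refine ⟨Finset.pairwise_sort _ _, List.pairwise_singleton _ m, ?_⟩
    intro a ha b hb
    rw [List.mem_singleton.mp hb]
    exact h a (Finset.mem_of_mem_erase ((Finset.mem_sort _).mp ha))



lemma blockProd_min [Monoid 𝔘] {A : ℕ → 𝔘} {V : Finset ℕ} {m : ℕ}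
    (hm : m ∈ V) (h : ∀ x ∈ V, m ≤ x) :
    blockProd A V = A m * blockProd A (V.erase m) := by
  unfold blockProd blockList
  rw [sort_eq_cons hm h, List.map_cons, List.prod_cons]

lemma blockProd_max [Monoid 𝔘] {A : ℕ → 𝔘} {V : Finset ℕ} {m : ℕ}
    (hm : m ∈ V) (h : ∀ x ∈ V, x ≤ m) :
    blockProd A V = blockProd A (V.erase m) * A m := by
  unfold blockProd blockList
  rw [sort_eq_append hm h, List.map_append, List.prod_append]
  simp

lemma erase_singleton_mem {S : Finset ℕ} {m : ℕ} {π : Finset (Finset ℕ)}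
    (hπ : π ∈ ncPartitions S) (hmem : {m} ∈ π) :
    π.erase {m} ∈ ncPartitions (S.erase m) := by
  obtain ⟨hsp, hnc⟩ := mem_ncPartitions'.mp hπ
  refine mem_ncPartitions'.mpr ⟨⟨?_, ?_, ?_⟩, hnc.mono (Finset.erase_subset _ _)⟩
  · intro V hV
    have hVπ := Finset.mem_of_mem_erase hV
    have hne := Finset.ne_of_mem_erase hV
    intro x hx
    refine Finset.mem_erase.mpr ⟨?_, hsp.1 V hVπ hx⟩
    rintro rfl
    exact hne (hsp.block_eq hVπ hmem hx (Finset.mem_singleton_self _))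
  · intro V hV; exact hsp.2.1 V (Finset.mem_of_mem_erase hV)
  · intro a ha
    have haS := Finset.mem_of_mem_erase ha
    have ham := (Finset.mem_erase.mp ha).1
    obtain ⟨V, ⟨hVπ, haV⟩, hu⟩ := hsp.2.2 a haS
    refine ⟨V, ⟨Finset.mem_erase.mpr ⟨?_, hVπ⟩, haV⟩, ?_⟩
    · rintro rfl; exact ham (Finset.mem_singleton.mp haV)
    · rintro W ⟨hW, haW⟩; exact hu W ⟨Finset.mem_of_mem_erase hW, haW⟩

lemma insert_singleton_mem {S : Finset ℕ} {m : ℕ} {σ : Finset (Finset ℕ)}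
    (hm : m ∈ S) (hσ : σ ∈ ncPartitions (S.erase m)) :
    insert {m} σ ∈ ncPartitions S := by
  obtain ⟨hsp, hnc⟩ := mem_ncPartitions'.mp hσ
  have hmnot : ∀ V ∈ σ, m ∉ V := fun V hV hmV =>
    (Finset.mem_erase.mp (hsp.1 V hV hmV)).1 rfl
  refine mem_ncPartitions'.mpr ⟨⟨?_, ?_, ?_⟩, ?_⟩
  · intro V hV
    rcases Finset.mem_insert.mp hV with rfl | hV
    · exact Finset.singleton_subset_iff.mpr hm
    · exact (hsp.1 V hV).trans (Finset.erase_subset m S)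
  · intro V hV
    rcases Finset.mem_insert.mp hV with rfl | hV
    · exact ⟨m, Finset.mem_singleton_self m⟩
    · exact hsp.2.1 V hV
  · intro a ha
    by_cases ham : a = m
    · subst ham
      refine ⟨{a}, ⟨Finset.mem_insert_self _ _, Finset.mem_singleton_self a⟩, ?_⟩
      rintro W ⟨hW, haW⟩
      rcases Finset.mem_insert.mp hW with rfl | hW
      · rfl
      · exact absurd haW (hmnot W hW)
    · obtain ⟨V, ⟨hVσ, haV⟩, hu⟩ := hsp.2.2 a (Finset.mem_erase.mpr ⟨ham, ha⟩)
      refine ⟨V, ⟨Finset.mem_insert_of_mem hVσ, haV⟩, ?_⟩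
      rintro W ⟨hW, haW⟩
      rcases Finset.mem_insert.mp hW with rfl | hW
      · exact absurd (Finset.mem_singleton.mp haW) ham
      · exact hu W ⟨hW, haW⟩
  · rintro ⟨a, b, c, d, h1, h2, h3, V, hV, W, hW, hne, m1, m2, m3, m4⟩
    rcases Finset.mem_insert.mp hV with rfl | hV
    · have : a = c :=
        (Finset.mem_singleton.mp m1).trans (Finset.mem_singleton.mp m2).symm
      omega
    · rcases Finset.mem_insert.mp hW with rfl | hW
      · have : b = d :=
          (Finset.mem_singleton.mp m3).trans (Finset.mem_singleton.mp m4).symm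
        omega
      · exact hnc ⟨a, b, c, d, h1, h2, h3, V, hV, W, hW, hne, m1, m2, m3, m4⟩

lemma sum_singleton_block {S : Finset ℕ} {m : ℕ} (hm : m ∈ S) (F : Finset ℕ → ℂ) :
    ∑ π ∈ (ncPartitions S).filter (fun π => {m} ∈ π), ∏ V ∈ π, F V
      = F {m} * ∑ σ ∈ ncPartitions (S.erase m), ∏ V ∈ σ, F V := by
  rw [Finset.mul_sum]
  refine Finset.sum_bij' (fun π _ => π.erase {m}) (fun σ _ => insert {m} σ)
    ?_ ?_ ?_ ?_ ?_
  · intro π hπ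
    obtain ⟨hπ1, hπ2⟩ := Finset.mem_filter.mp hπ
    exact erase_singleton_mem hπ1 hπ2
  · intro σ hσ
    refine Finset.mem_filter.mpr ⟨insert_singleton_mem hm hσ, Finset.mem_insert_self _ _⟩
  · intro π hπ
    exact Finset.insert_erase (Finset.mem_filter.mp hπ).2
  · intro σ hσ
    have hmnot : {m} ∉ σ := fun hmem => by
      have := ((mem_ncPartitions'.mp hσ).1).1 _ hmem (Finset.mem_singleton_self m)
      exact (Finset.mem_erase.mp this).1 rfl
    exact Finset.erase_insert hmnot
  · intro π hπ
    exact (Finset.mul_prod_erase π F (Finset.mem_filter.mp hπ).2).symm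

lemma key_tendsto [Monoid 𝔘] {ι : Type*} (ω : 𝔘 → ℂ) (κ : List 𝔘 → ℂ)
    (hκ : IsFreeCumulantFamily ω κ) (l : Filter ι)
    (A : ℕ → 𝔘) (B : ι → ℕ → 𝔘) (m : ℕ)
    (hB : ∀ i x, x ≠ m → B i x = A x) (T : Finset ℕ)
    (hH : ∀ V : Finset ℕ, V ⊆ T → m ∈ V →
      Filter.Tendsto (fun i => ω (blockProd (B i) V)
        - ω (B i m) * ω (blockProd A (V.erase m))) l (𝓝 0)) :
    ∀ k (V : Finset ℕ), V.card ≤ k → V ⊆ T → m ∈ V → 2 ≤ V.card →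
      Filter.Tendsto (fun i => κ (blockList (B i) V)) l (𝓝 0) := by
  intro k
  induction k with
  | zero => intro V h1 _ _ h2; omega
  | succ k IH =>
    intro V hcard hVT hmV hc2
    have hVne : V.Nonempty := ⟨m, hmV⟩
    have hfull : {V} ∈ ncPartitions V := full_mem_ncPartitions hVne
    set E := ((ncPartitions V).erase {V}).filter (fun π => {m} ∉ π) with hE
    have heq : ∀ i, κ (blockList (B i) V)
        = (ω (blockProd (B i) V) - ω (B i m) * ω (blockProd A (V.erase m)))
          - ∑ π ∈ E, ∏ W ∈ π, κ (blockList (B i) W) := by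
      intro i
      have h2' : ((ncPartitions V).erase {V}).filter (fun π => ({m} : Finset ℕ) ∈ π)
          = (ncPartitions V).filter (fun π => ({m} : Finset ℕ) ∈ π) := by
        ext π
        simp only [Finset.mem_filter, Finset.mem_erase]
        constructor
        · rintro ⟨⟨-, h1⟩, h2⟩; exact ⟨h1, h2⟩
        · rintro ⟨h1, h2⟩
          refine ⟨⟨?_, h1⟩, h2⟩
          rintro rfl
          have : ({m} : Finset ℕ) = V := Finset.mem_singleton.mp h2
          rw [← this] at hc2
          simp at hc2
      have h4 : ∑ π ∈ (ncPartitions V).filter (fun π => ({m} : Finset ℕ) ∈ π),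
            ∏ W ∈ π, κ (blockList (B i) W)
          = ω (B i m) * ω (blockProd A (V.erase m)) := by
        rw [sum_singleton_block hmV]
        congr 1
        · exact kappa_singleton hκ (B i) m
        · have hne' : (V.erase m).Nonempty := by
            rw [← Finset.card_pos, Finset.card_erase_of_mem hmV]; omega
          rw [hκ A (V.erase m) hne']
          apply Finset.sum_congr rfl
          intro σ hσ
          apply Finset.prod_congr rfl
          intro W hW
          have hWsub : W ⊆ V.erase m := ((mem_ncPartitions'.mp hσ).1).1 W hW
          exact congrArg κ (blockList_congr (fun x hx => hB i x (Finset.mem_erase.mp (hWsub hx)).1))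
      have hmain : ω (blockProd (B i) V)
          = κ (blockList (B i) V) + (ω (B i m) * ω (blockProd A (V.erase m))
            + ∑ π ∈ E, ∏ W ∈ π, κ (blockList (B i) W)) := by
        rw [hκ (B i) V hVne, ← Finset.add_sum_erase _ _ hfull, Finset.prod_singleton,
          ← Finset.sum_filter_add_sum_filter_not ((ncPartitions V).erase {V})
            (fun π => ({m} : Finset ℕ) ∈ π), h2', h4]
      linear_combination -hmain
    have hR : Filter.Tendsto (fun i => ∑ π ∈ E, ∏ W ∈ π, κ (blockList (B i) W)) l (𝓝 0) := by
      have h0 : (0 : ℂ) = ∑ _π ∈ E, (0 : ℂ) := by simp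
      rw [h0]
      apply tendsto_finset_sum
      intro π hπ
      obtain ⟨hπ1, hπ2⟩ := Finset.mem_filter.mp hπ
      have hπnc := Finset.mem_of_mem_erase hπ1
      have hπne := Finset.ne_of_mem_erase hπ1
      obtain ⟨hsp, -⟩ := mem_ncPartitions'.mp hπnc
      obtain ⟨W, ⟨hWπ, hmW⟩, hu⟩ := hsp.2.2 m hmV
      have hWV : W ⊆ V := hsp.1 W hWπ
      have hWm : W ≠ {m} := by rintro rfl; exact hπ2 hWπ
      have hcW2 : 2 ≤ W.card := by
        by_contra hcon
        push_neg at hcon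
        refine hWm (Finset.eq_singleton_iff_unique_mem.mpr ⟨hmW, fun x hx => ?_⟩)
        exact Finset.card_le_one.mp (by omega) x hx m hmW
      have hWlt : W.card < V.card := by
        rcases lt_or_eq_of_le (Finset.card_le_card hWV) with hlt | heqc
        · exact hlt
        · exfalso
          have hWVeq : W = V := Finset.eq_of_subset_of_card_le hWV (le_of_eq heqc.symm)
          subst hWVeq
          exact hπne (hsp.eq_full hWπ)
      have hWten := IH W (by omega) (hWV.trans hVT) hmW hcW2
      have hconst := hWten.mul_const (∏ W' ∈ π.erase W, κ (blockList A W'))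
      rw [zero_mul] at hconst
      apply hconst.congr
      intro i
      rw [← Finset.mul_prod_erase π _ hWπ]
      congr 1
      apply Finset.prod_congr rfl
      intro W' hW'
      have hW'' := Finset.mem_of_mem_erase hW'
      have hneW : W' ≠ W := Finset.ne_of_mem_erase hW'
      have hmnot : m ∉ W' := fun hmm => hneW (hu W' ⟨hW'', hmm⟩)
      exact congrArg κ (blockList_congr (fun x hx => (hB i x (fun hxm => hmnot (hxm ▸ hx))).symm))
    have hfin := (hH V hVT hmV).sub hR
    rw [sub_zero] at hfin
    exact hfin.congr (fun i => (heq i).symm)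

lemma state_star [NormedRing 𝔘] [StarRing 𝔘] [NormedAlgebra ℂ 𝔘] [StarModule ℂ 𝔘]
    (ω : 𝔘 →ₗ[ℂ] ℂ) (hω : IsState ω) (x : 𝔘) : ω (star x) = starRingEnd ℂ (ω x) := by
  have him : ∀ y : 𝔘, (ω (star y * y)).im = 0 := fun y => (hω.positive y).2
  have keyc : ∀ a b : 𝔘, ω (star b * a) = starRingEnd ℂ (ω (star a * b)) := by
    intro a b
    have e1 := him (a + b)
    have e2 := him (a + Complex.I • b)
    have expand1 : ω (star (a + b) * (a + b))
        = ω (star a * a) + ω (star a * b) + ω (star b * a) + ω (star b * b) := by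
      rw [star_add, add_mul, mul_add, mul_add, map_add, map_add, map_add]
      ring
    have expand2 : ω (star (a + Complex.I • b) * (a + Complex.I • b))
        = ω (star a * a) + Complex.I * ω (star a * b) - Complex.I * ω (star b * a)
          + ω (star b * b) := by
      rw [star_add, star_smul, add_mul, mul_add, mul_add, map_add, map_add, map_add]
      rw [mul_smul_comm, smul_mul_assoc, smul_mul_assoc, mul_smul_comm, smul_smul]
      rw [map_smul, map_smul, map_smul, smul_eq_mul, smul_eq_mul, smul_eq_mul]
      rw [RCLike.star_def, Complex.conj_I]
      ring_nf
      rw [Complex.I_sq]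
      ring
    rw [expand1] at e1
    rw [expand2] at e2
    simp only [Complex.add_im, Complex.sub_im, Complex.mul_im, Complex.I_re, Complex.I_im,
      him a, him b] at e1 e2
    apply Complex.ext
    · simp only [Complex.conj_re]; linarith
    · simp only [Complex.conj_im]; linarith
  have := keyc 1 x
  rwa [mul_one, star_one, one_mul] at this

/-- if the state is G-clustering along the net g^i, then every n-th free
cumulant with the first (or the last) argument translated vanishes along the net. -/
theorem free_cumulant_clustering {G ι : Type*} [Group G] [TopologicalSpace G] [IsTopologicalGroup G]
    [LocallyCompactSpace G]
    [NormedRing 𝔘] [StarRing 𝔘] [CStarRing 𝔘] [NormedAlgebra ℂ 𝔘] [StarModule ℂ 𝔘]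
    [CompleteSpace 𝔘]
    (α : G → 𝔘 ≃⋆ₐ[ℂ] 𝔘) (hα : IsStarAutoRep α)
    (ω : 𝔘 →ₗ[ℂ] ℂ) (hω : IsState ω)
    (l : Filter ι) (g : ι → G)
    (κ : List 𝔘 → ℂ) (hκ : IsFreeCumulantFamily ⇑ω κ)
    (hcl : ∀ A B : 𝔘, Filter.Tendsto
      (fun i => ω (α (g i) A * B) - ω (α (g i) A) * ω B) l (𝓝 0)) :
    ∀ n, 2 ≤ n → ∀ A : ℕ → 𝔘,
      Filter.Tendsto
        (fun i => κ (blockList (Function.update A 1 (α (g i) (A 1))) (Finset.Icc 1 n)))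
        l (𝓝 0) ∧
      Filter.Tendsto
        (fun i => κ (blockList (Function.update A n (α (g i) (A n))) (Finset.Icc 1 n)))
        l (𝓝 0) := by
  intro n hn A
  have hcard : (Finset.Icc 1 n).card = n := by rw [Nat.card_Icc]; omega
  have hmem1 : (1 : ℕ) ∈ Finset.Icc 1 n := Finset.mem_Icc.mpr ⟨le_refl 1, by omega⟩
  have hmemn : n ∈ Finset.Icc 1 n := Finset.mem_Icc.mpr ⟨by omega, le_refl n⟩
  constructor
  · set B : ι → ℕ → 𝔘 := fun i => Function.update A 1 (α (g i) (A 1)) with hBdef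
    have hB : ∀ (i : ι) (x : ℕ), x ≠ 1 → B i x = A x := fun i x hx =>
      Function.update_of_ne hx _ _
    refine key_tendsto ⇑ω κ hκ l A B 1 hB (Finset.Icc 1 n) ?_ n (Finset.Icc 1 n)
      (le_of_eq hcard) (subset_refl _) hmem1 (by omega)
    intro V hVT hmV
    have hmin : ∀ x ∈ V, 1 ≤ x := fun x hx => (Finset.mem_Icc.mp (hVT hx)).1
    have hfac : ∀ i, blockProd (B i) V = α (g i) (A 1) * blockProd A (V.erase 1) := by
      intro i
      have h1 : B i 1 = α (g i) (A 1) := Function.update_self _ _ _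
      have h2 : blockProd (B i) (V.erase 1) = blockProd A (V.erase 1) :=
        congrArg List.prod (blockList_congr (fun x hx =>
          Function.update_of_ne (Finset.mem_erase.mp hx).1 _ _))
      rw [blockProd_min hmV hmin, h1, h2]
    apply (hcl (A 1) (blockProd A (V.erase 1))).congr
    intro i
    rw [hfac i]
    simp only [hBdef, Function.update_self]
  · -- reversed clustering via hermiticity of the state
    have herm := state_star ω hω
    have hcl' : ∀ C D : 𝔘, Filter.Tendsto
        (fun i => ω (C * α (g i) D) - ω C * ω (α (g i) D)) l (𝓝 0) := by
      intro C D
      have h := (hcl (star D) (star C)).star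
      rw [star_zero] at h
      apply h.congr
      intro i
      have c1 : star (α (g i) (star D) * star C) = C * α (g i) D := by
        rw [star_mul, star_star, ← map_star, star_star]
      have hy1 : star (ω (α (g i) (star D) * star C)) = ω (C * α (g i) D) := by
        rw [← starRingEnd_apply, ← herm, c1]
      have hy2 : star (ω (α (g i) (star D))) = ω (α (g i) D) := by
        rw [← starRingEnd_apply, ← herm, ← map_star, star_star]
      have hy3 : star (ω (star C)) = ω C := by
        rw [← starRingEnd_apply, ← herm, star_star]
      rw [star_sub, star_mul', hy1, hy2, hy3, mul_comm]
    set B : ι → ℕ → 𝔘 := fun i => Function.update A n (α (g i) (A n)) with hBdef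
    have hB : ∀ (i : ι) (x : ℕ), x ≠ n → B i x = A x := fun i x hx =>
      Function.update_of_ne hx _ _
    refine key_tendsto ⇑ω κ hκ l A B n hB (Finset.Icc 1 n) ?_ n (Finset.Icc 1 n)
      (le_of_eq hcard) (subset_refl _) hmemn (by omega)
    intro V hVT hmV
    have hmax : ∀ x ∈ V, x ≤ n := fun x hx => (Finset.mem_Icc.mp (hVT hx)).2
    have hfac : ∀ i, blockProd (B i) V = blockProd A (V.erase n) * α (g i) (A n) := by
      intro i
      have h1 : B i n = α (g i) (A n) := Function.update_self _ _ _
      have h2 : blockProd (B i) (V.erase n) = blockProd A (V.erase n) :=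
        congrArg List.prod (blockList_congr (fun x hx =>
          Function.update_of_ne (Finset.mem_erase.mp hx).1 _ _))
      rw [blockProd_max hmV hmax, h1, h2]
    apply (hcl' (blockProd A (V.erase n)) (A n)).congr
    intro i
    rw [hfac i]
    simp only [hBdef, Function.update_self]
    ring
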